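/- Let F₂ = FreeGroup (Fin 2) be the free group on two generators a, b, and let ψ : F₂ ≃* F₂ be the automorphism determined by ψ(a) = b⁻¹ and ψ(b) = a·b. Then ψ⁶ is an inner automorphism of F₂, while ψᵏ is not inner for each k = 1, 2, 3, 4, 5. In other words, the image of ψ in the outer automorphism group Out(F₂) has order exactly six. -/

import Mathlib

private def fab : FreeGroup (Fin 2) →* Multiplicative (ℤ × ℤ) :=
  FreeGroup.lift (fun i => Multiplicative.ofAdd (if i = 0 then ((1:ℤ),(0:ℤ)) else (0,1)))

/-- The trefoil monodromy `a ↦ b⁻¹`, `b ↦ ab` of the free group on two generators has order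
exactly six in the outer automorphism group: `ψ⁶` is inner, while `ψᵏ` is not inner for
`k = 1, …, 5`. -/
theorem trefoil_monodromy_order_six_in_out (ψ : MulAut (FreeGroup (Fin 2)))
    (ha : ψ (FreeGroup.of 0) = (FreeGroup.of 1)⁻¹)
    (hb : ψ (FreeGroup.of 1) = FreeGroup.of 0 * FreeGroup.of 1) :
    (∃ g : FreeGroup (Fin 2), ψ ^ 6 = MulAut.conj g) ∧
      ∀ k : ℕ, 1 ≤ k → k ≤ 5 → ¬∃ g : FreeGroup (Fin 2), ψ ^ k = MulAut.conj g := by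
  set A := FreeGroup.of (0 : Fin 2) with hA
  set B := FreeGroup.of (1 : Fin 2) with hB
  have h1a : (ψ ^ 1) A = B⁻¹ := by rw [pow_one]; exact ha
  have h1b : (ψ ^ 1) B = A * B := by rw [pow_one]; exact hb
  have h2a : (ψ ^ 2) A = B⁻¹ * A⁻¹ := by
    rw [pow_succ ψ 1, MulAut.mul_apply, ha, map_inv, h1b]; group
  have h2b : (ψ ^ 2) B = B⁻¹ * A * B := by
    rw [pow_succ ψ 1, MulAut.mul_apply, hb, map_mul, h1a, h1b]; group
  have h3a : (ψ ^ 3) A = B⁻¹ * A⁻¹ * B := by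
    rw [pow_succ ψ 2, MulAut.mul_apply, ha, map_inv, h2b]; group
  have h3b : (ψ ^ 3) B = B⁻¹ * A⁻¹ * B⁻¹ * A * B := by
    rw [pow_succ ψ 2, MulAut.mul_apply, hb, map_mul, h2a, h2b]; group
  have h4a : (ψ ^ 4) A = B⁻¹ * A⁻¹ * B * A * B := by
    rw [pow_succ ψ 3, MulAut.mul_apply, ha, map_inv, h3b]; group
  have h4b : (ψ ^ 4) B = B⁻¹ * A⁻¹ * A⁻¹ * B⁻¹ * A * B := by
    rw [pow_succ ψ 3, MulAut.mul_apply, hb, map_mul, h3a, h3b]; group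
  have h5a : (ψ ^ 5) A = B⁻¹ * A⁻¹ * B * A ^ (2:ℤ) * B := by
    rw [pow_succ ψ 4, MulAut.mul_apply, ha, map_inv, h4b]; group
  have h5b : (ψ ^ 5) B = B⁻¹ * A⁻¹ * B * A⁻¹ * B⁻¹ * A * B := by
    rw [pow_succ ψ 4, MulAut.mul_apply, hb, map_mul, h4a, h4b]; group
  have h6a : (ψ ^ 6) A = B⁻¹ * A⁻¹ * B * A * B⁻¹ * A * B := by
    rw [pow_succ ψ 5, MulAut.mul_apply, ha, map_inv, h5b]; group
  have h6b : (ψ ^ 6) B = B⁻¹ * A⁻¹ * B * A * B * A⁻¹ * B⁻¹ * A * B := by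
    rw [pow_succ ψ 5, MulAut.mul_apply, hb, map_mul, h5a, h5b]; group
  constructor
  · refine ⟨B⁻¹ * A⁻¹ * B * A, ?_⟩
    have key : ((ψ ^ 6 : MulAut (FreeGroup (Fin 2))) : FreeGroup (Fin 2) →* FreeGroup (Fin 2))
        = (MulAut.conj (B⁻¹ * A⁻¹ * B * A) : FreeGroup (Fin 2) →* FreeGroup (Fin 2)) := by
      apply FreeGroup.ext_hom
      intro i
      fin_cases i
      · show (ψ ^ 6) A = _
        rw [h6a]
        simp [MulAut.conj_apply]
        simp only [hA, hB]
        group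
      · show (ψ ^ 6) B = _
        rw [h6b]
        simp [MulAut.conj_apply]
        simp only [hA, hB]
        group
    exact MulEquiv.toMonoidHom_injective key
  · intro k hk1 hk5 ⟨g, hg⟩
    have hfa : fab A = Multiplicative.ofAdd ((1:ℤ), (0:ℤ)) := by
      simp [fab, hA, FreeGroup.lift_apply_of]
    have hfb : fab B = Multiplicative.ofAdd ((0:ℤ), (1:ℤ)) := by
      simp [fab, hB, FreeGroup.lift_apply_of]
    have hx : (ψ ^ k) A = g * A * g⁻¹ := by rw [hg]; rfl
    have hfx : fab ((ψ ^ k) A) = fab A := by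
      rw [hx, map_mul, map_mul, map_inv, mul_comm (fab g) (fab A), mul_inv_cancel_right]
    interval_cases k
    · rw [h1a, map_inv, hfb, hfa] at hfx; exact absurd hfx (by decide)
    · rw [h2a, map_mul, map_inv, map_inv, hfa, hfb] at hfx; exact absurd hfx (by decide)
    · rw [h3a, map_mul, map_mul, map_inv, map_inv, hfa, hfb] at hfx
      exact absurd hfx (by decide)
    · rw [h4a] at hfx
      simp only [map_mul, map_inv, hfa, hfb] at hfx
      exact absurd hfx (by decide)
    · rw [h5a] at hfx
      simp only [map_mul, map_inv, map_zpow, hfa, hfb] at hfx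
      exact absurd hfx (by decide)
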